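/- For a triangle with vertices P_1, P_2, P_3 and a point M strictly outside the triangle and not on any of the six rays obtained by extending the edges, the sum of the cross functions ρ_{P_1}(M) + ρ_{P_2}(M) + ρ_{P_3}(M) equals 0, while for M strictly inside the triangle the sum equals 1. -/

import Mathlib

open Real EuclideanGeometry

/-- M lies in one of the two open wedges of angle ∠XVY formed by the two lines
through V and X, resp. V and Y (the "inner" wedges at the vertex V). -/
def InInnerWedge (V X Y M : EuclideanSpace ℝ (Fin 2)) : Prop :=
  ∃ l m : ℝ, 0 < l ∧ 0 < m ∧
    (M - V = l • (X - V) + m • (Y - V) ∨ M - V = -(l • (X - V) + m • (Y - V)))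

open Classical in
/-- The cross function of M at a convex vertex V with adjacent vertices X, Y:
1/2 - θ/(2π) if M is in an inner wedge, -θ/(2π) otherwise, where θ = ∠XVY. -/
noncomputable def rho (V X Y M : EuclideanSpace ℝ (Fin 2)) : ℝ :=
  if InInnerWedge V X Y M then 1 / 2 - EuclideanGeometry.angle X V Y / (2 * π)
  else -(EuclideanGeometry.angle X V Y / (2 * π))

lemma wedge_iff {V X Y M : EuclideanSpace ℝ (Fin 2)} {s t : ℝ}
    (hM : M - V = s • (X - V) + t • (Y - V))
    (hz : ∀ a b : ℝ, a • (X - V) + b • (Y - V) = 0 → a = 0 ∧ b = 0) :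
    InInnerWedge V X Y M ↔ 0 < s * t := by
  constructor
  · rintro ⟨l, m, hl, hm, h | h⟩
    · rw [hM] at h
      obtain ⟨h1, h2⟩ := hz (s - l) (t - m) (by linear_combination (norm := module) h)
      have hs : s = l := by linarith
      have ht : t = m := by linarith
      rw [hs, ht]; exact mul_pos hl hm
    · rw [hM] at h
      obtain ⟨h1, h2⟩ := hz (s + l) (t + m) (by linear_combination (norm := module) h)
      have hs : s = -l := by linarith
      have ht : t = -m := by linarith
      rw [hs, ht]
      simpa using mul_pos hl hm
  · intro hst
    rcases lt_trichotomy s 0 with hs | hs | hs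
    · have ht : t < 0 := by nlinarith
      exact ⟨-s, -t, by linarith, by linarith, Or.inr (by rw [hM]; module)⟩
    · rw [hs] at hst; simp at hst
    · have ht : 0 < t := by nlinarith
      exact ⟨s, t, hs, ht, Or.inl hM⟩

lemma rho_pos {V X Y M : EuclideanSpace ℝ (Fin 2)} (h : InInnerWedge V X Y M) :
    rho V X Y M = 1 / 2 - EuclideanGeometry.angle X V Y / (2 * π) := by
  rw [rho, if_pos h]

lemma rho_neg {V X Y M : EuclideanSpace ℝ (Fin 2)} (h : ¬ InInnerWedge V X Y M) :
    rho V X Y M = -(EuclideanGeometry.angle X V Y / (2 * π)) := by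
  rw [rho, if_neg h]

/-- For a triangle P₁P₂P₃ and a point M not on any of the lines through the
edges: if M is strictly outside the triangle the sum of the three cross
functions is 0, and if M is strictly inside it the sum is 1. -/
theorem sum_rho_triangle (P1 P2 P3 M : EuclideanSpace ℝ (Fin 2))
    (hind : AffineIndependent ℝ ![P1, P2, P3])
    (hl12 : M ∉ line[ℝ, P1, P2]) (hl23 : M ∉ line[ℝ, P2, P3])
    (hl13 : M ∉ line[ℝ, P1, P3]) :
    (M ∉ convexHull ℝ {P1, P2, P3} →
      rho P1 P2 P3 M + rho P2 P1 P3 M + rho P3 P1 P2 M = 0) ∧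
    (M ∈ interior (convexHull ℝ {P1, P2, P3}) →
      rho P1 P2 P3 M + rho P2 P1 P3 M + rho P3 P1 P2 M = 1) := by
  classical
  -- linear independence of edge vectors
  have hzero : ∀ a b : ℝ, a • (P2 - P1) + b • (P3 - P1) = 0 → a = 0 ∧ b = 0 := by
    intro a b hab
    have hs : ∑ e ∈ Finset.univ, (![-(a+b), a, b]) e = (0:ℝ) := by
      rw [Fin.sum_univ_three]
      simp only [Matrix.cons_val_zero, Matrix.cons_val_one, Matrix.head_cons,
        Matrix.cons_val_two, Matrix.tail_cons]
      ring
    have h0 : ∑ e ∈ Finset.univ, (![-(a+b), a, b]) e • (![P1,P2,P3]) e = 0 := by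
      rw [Fin.sum_univ_three]
      simp only [Matrix.cons_val_zero, Matrix.cons_val_one, Matrix.head_cons,
        Matrix.cons_val_two, Matrix.tail_cons]
      linear_combination (norm := module) hab
    have hall := affineIndependent_iff.mp hind Finset.univ _ hs h0
    have ha := hall 1 (Finset.mem_univ _)
    have hb := hall 2 (Finset.mem_univ _)
    simp at ha hb
    exact ⟨ha, hb⟩
  have hcoef : ∀ a b a' b' : ℝ,
      a • (P2 - P1) + b • (P3 - P1) = a' • (P2 - P1) + b' • (P3 - P1) →
      a = a' ∧ b = b' := by
    intro a b a' b' h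
    obtain ⟨h1, h2⟩ := hzero (a - a') (b - b') (by linear_combination (norm := module) h)
    exact ⟨by linarith, by linarith⟩
  have hli : LinearIndependent ℝ ![P2 - P1, P3 - P1] :=
    LinearIndependent.pair_iff.mpr hzero
  have hspan : Submodule.span ℝ (Set.range ![P2 - P1, P3 - P1]) = ⊤ :=
    hli.span_eq_top_of_card_eq_finrank (by simp)
  obtain ⟨β, γ, hM⟩ : ∃ β γ : ℝ, M - P1 = β • (P2 - P1) + γ • (P3 - P1) := by
    have hmem : M - P1 ∈ Submodule.span ℝ (Set.range ![P2 - P1, P3 - P1]) := by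
      rw [hspan]; trivial
    obtain ⟨c, hc⟩ := (Submodule.mem_span_range_iff_exists_fun ℝ).mp hmem
    refine ⟨c 0, c 1, ?_⟩
    rw [← hc, Fin.sum_univ_two]
    simp
  obtain ⟨α, hα⟩ : ∃ α : ℝ, α = 1 - β - γ := ⟨_, rfl⟩
  have hMeq : M = β • (P2 - P1) + γ • (P3 - P1) + P1 := by
    rw [← hM]; abel
  -- nonvanishing of the barycentric coordinates
  have hγ0 : γ ≠ 0 := by
    intro h
    apply hl12
    have hML : M = AffineMap.lineMap P1 P2 β := by
      rw [AffineMap.lineMap_apply]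
      simp only [vsub_eq_sub, vadd_eq_add]
      rw [hMeq, h]; module
    rw [hML]
    exact AffineMap.lineMap_mem_affineSpan_pair _ _ _
  have hβ0 : β ≠ 0 := by
    intro h
    apply hl13
    have hML : M = AffineMap.lineMap P1 P3 γ := by
      rw [AffineMap.lineMap_apply]
      simp only [vsub_eq_sub, vadd_eq_add]
      rw [hMeq, h]; module
    rw [hML]
    exact AffineMap.lineMap_mem_affineSpan_pair _ _ _
  have hα0 : α ≠ 0 := by
    intro h
    apply hl23
    have hML : M = AffineMap.lineMap P2 P3 γ := by
      rw [AffineMap.lineMap_apply]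
      simp only [vsub_eq_sub, vadd_eq_add]
      rw [hMeq, show β = 1 - γ by rw [hα] at h; linarith]; module
    rw [hML]
    exact AffineMap.lineMap_mem_affineSpan_pair _ _ _
  -- the three wedge characterisations
  have hW1 : InInnerWedge P1 P2 P3 M ↔ 0 < β * γ := wedge_iff hM hzero
  have hW2 : InInnerWedge P2 P1 P3 M ↔ 0 < α * γ := by
    refine wedge_iff ?_ ?_
    · rw [hMeq, hα]; module
    · intro a b h
      obtain ⟨h1, h2⟩ := hzero (-(a+b)) b
        (by rw [show (-(a+b)) • (P2 - P1) + b • (P3 - P1) =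
              a • (P1 - P2) + b • (P3 - P2) by module]; exact h)
      exact ⟨by linarith, h2⟩
  have hW3 : InInnerWedge P3 P1 P2 M ↔ 0 < α * β := by
    refine wedge_iff ?_ ?_
    · rw [hMeq, hα]; module
    · intro a b h
      obtain ⟨h1, h2⟩ := hzero b (-(a+b))
        (by rw [show b • (P2 - P1) + (-(a+b)) • (P3 - P1) =
              a • (P1 - P3) + b • (P2 - P3) by module]; exact h)
      exact ⟨by linarith, h1⟩
  -- hull membership ↔ nonnegativity
  have hull_to : M ∈ convexHull ℝ {P1, P2, P3} → 0 ≤ α ∧ 0 ≤ β ∧ 0 ≤ γ := by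
    intro hMhull
    rw [show ({P1, P2, P3} : Set (EuclideanSpace ℝ (Fin 2))) = insert P1 {P2, P3} from rfl,
      convexHull_insert ⟨P2, by simp⟩, mem_convexJoin] at hMhull
    obtain ⟨a, ha, z, hz, hseg⟩ := hMhull
    rw [Set.mem_singleton_iff] at ha
    rw [ha] at hseg
    rw [convexHull_pair] at hz
    obtain ⟨c, d, hc, hd, hcd, rfl⟩ := hz
    obtain ⟨e, f, he, hf, hef, hM'⟩ := hseg
    have h1 : M - P1 = (f*c) • (P2 - P1) + (f*(1-c)) • (P3 - P1) := by
      rw [← hM', show e = 1 - f by linarith, show d = 1 - c by linarith]; module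
    obtain ⟨hb, hg⟩ := hcoef _ _ _ _ (hM.symm.trans h1)
    have hfc : f*c + f*(1-c) = f := by ring
    refine ⟨?_, ?_, ?_⟩
    · rw [hα, hb, hg]; linarith
    · rw [hb]; exact mul_nonneg hf hc
    · rw [hg]; exact mul_nonneg hf (by linarith)
  have to_hull : 0 < α → 0 < β → 0 < γ → M ∈ convexHull ℝ {P1, P2, P3} := by
    intro ha hb hc
    have := (convex_convexHull ℝ ({P1, P2, P3} : Set (EuclideanSpace ℝ (Fin 2)))).sum_mem
      (t := Finset.univ) (w := ![α, β, γ]) (z := ![P1, P2, P3])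
      (fun i _ => by fin_cases i <;> simp [ha.le, hb.le, hc.le])
      (by rw [Fin.sum_univ_three]; simp [hα]; ring)
      (fun i _ => by fin_cases i <;> exact subset_convexHull _ _ (by simp))
    rw [Fin.sum_univ_three] at this
    simp only [Matrix.cons_val_zero, Matrix.cons_val_one, Matrix.head_cons,
      Matrix.cons_val_two, Matrix.tail_cons] at this
    have hMc : M = α • P1 + β • P2 + γ • P3 := by
      rw [hMeq, hα]; module
    rwa [← hMc] at this
  -- distinctness and angle sum
  have h21 : P2 ≠ P1 := by
    intro h
    have : (1 : Fin 3) = 0 := hind.injective (by simp [h])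
    exact absurd this (by decide)
  have h31 : P3 ≠ P1 := by
    intro h
    have : (2 : Fin 3) = 0 := hind.injective (by simp [h])
    exact absurd this (by decide)
  have hsum : ∠ P2 P1 P3 + ∠ P1 P2 P3 + ∠ P1 P3 P2 = π := by
    have := EuclideanGeometry.angle_add_angle_add_angle_eq_pi P3 h21
    rw [angle_comm P2 P1 P3, angle_comm P1 P3 P2]
    linarith
  have h2pi : (2 * π) ≠ 0 := by positivity
  have hdiv : ∠ P2 P1 P3 / (2*π) + ∠ P1 P2 P3 / (2*π) + ∠ P1 P3 P2 / (2*π) = 1/2 := by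
    rw [← add_div, ← add_div, hsum, div_eq_iff h2pi]
    ring
  have nW1 : β * γ < 0 → ¬ InInnerWedge P1 P2 P3 M :=
    fun h hw => absurd (hW1.mp hw) (not_lt.mpr h.le)
  have nW2 : α * γ < 0 → ¬ InInnerWedge P2 P1 P3 M :=
    fun h hw => absurd (hW2.mp hw) (not_lt.mpr h.le)
  have nW3 : α * β < 0 → ¬ InInnerWedge P3 P1 P2 M :=
    fun h hw => absurd (hW3.mp hw) (not_lt.mpr h.le)
  constructor
  · intro hout
    have hnotall : ¬ (0 < α ∧ 0 < β ∧ 0 < γ) := fun ⟨x, y, z⟩ => hout (to_hull x y z)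
    rcases lt_or_gt_of_ne hα0 with ha | ha <;>
      rcases lt_or_gt_of_ne hβ0 with hb | hb <;>
      rcases lt_or_gt_of_ne hγ0 with hc | hc
    · exfalso; rw [hα] at ha; linarith
    · rw [rho_neg (nW1 (mul_neg_of_neg_of_pos hb hc)),
          rho_neg (nW2 (mul_neg_of_neg_of_pos ha hc)),
          rho_pos (hW3.mpr (mul_pos_of_neg_of_neg ha hb))]
      linarith
    · rw [rho_neg (nW1 (mul_neg_of_pos_of_neg hb hc)),
          rho_pos (hW2.mpr (mul_pos_of_neg_of_neg ha hc)),
          rho_neg (nW3 (mul_neg_of_neg_of_pos ha hb))]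
      linarith
    · rw [rho_pos (hW1.mpr (mul_pos hb hc)),
          rho_neg (nW2 (mul_neg_of_neg_of_pos ha hc)),
          rho_neg (nW3 (mul_neg_of_neg_of_pos ha hb))]
      linarith
    · rw [rho_pos (hW1.mpr (mul_pos_of_neg_of_neg hb hc)),
          rho_neg (nW2 (mul_neg_of_pos_of_neg ha hc)),
          rho_neg (nW3 (mul_neg_of_pos_of_neg ha hb))]
      linarith
    · rw [rho_neg (nW1 (mul_neg_of_neg_of_pos hb hc)),
          rho_pos (hW2.mpr (mul_pos ha hc)),
          rho_neg (nW3 (mul_neg_of_pos_of_neg ha hb))]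
      linarith
    · rw [rho_neg (nW1 (mul_neg_of_pos_of_neg hb hc)),
          rho_neg (nW2 (mul_neg_of_pos_of_neg ha hc)),
          rho_pos (hW3.mpr (mul_pos ha hb))]
      linarith
    · exact absurd ⟨ha, hb, hc⟩ hnotall
  · intro hint
    obtain ⟨ha, hb, hc⟩ := hull_to (interior_subset hint)
    have ha' : 0 < α := lt_of_le_of_ne ha (Ne.symm hα0)
    have hb' : 0 < β := lt_of_le_of_ne hb (Ne.symm hβ0)
    have hc' : 0 < γ := lt_of_le_of_ne hc (Ne.symm hγ0)
    rw [rho_pos (hW1.mpr (mul_pos hb' hc')),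
        rho_pos (hW2.mpr (mul_pos ha' hc')),
        rho_pos (hW3.mpr (mul_pos ha' hb'))]
    linarith
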